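/- Let ε₁, ε₂ > 0. For λ > 0 and (b, h) ∈ (0, ∞)², set E^{(λ)}_{(b,h)}(ε₁, ε₂) = {(b', h') ∈ (0, ∞)² : b'³ ≤ λ^{ε₁} h' and b' ≥ λ^{-ε₂} b}. Then (log λ) · sup { ∫_{(0,∞)² \ E^{(λ)}_{(b,h)}(ε₁, ε₂)} p^{(∞)}((b,h),(b',h')) db' dh' : (b, h) ∈ (0, ∞)² with b³ ≤ λ^{ε₁} h } converges to 0 as λ → ∞. -/

import Mathlib

open Real Filter MeasureTheory

/-- The limiting transition density
`p^{(∞)}((b,h),(b',h')) = (4(b−b')b'/h'²) exp(−(2/3)b³(1/h'−1/h)) 1_{(0,b)×(0,h)}(b',h')`. -/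
noncomputable def pinf (b h b' h' : ℝ) : ℝ :=
  4 * (b - b') * b' / h' ^ 2 * Real.exp (-(2 / 3 * b ^ 3 * (1 / h' - 1 / h))) *
    (if 0 < b' ∧ b' < b ∧ 0 < h' ∧ h' < h then 1 else 0)

/-- The good set `E^{(λ)}_{(b,h)}(ε₁, ε₂) ⊆ (0,∞)²`. -/
def Eset (lam ε₁ ε₂ b : ℝ) : Set (ℝ × ℝ) :=
  {p | 0 < p.1 ∧ 0 < p.2 ∧ p.1 ^ 3 ≤ lam ^ ε₁ * p.2 ∧ lam ^ (-ε₂) * b ≤ p.1}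

open Set

lemma G_deriv {c h : ℝ} (hc : 0 < c) {y : ℝ} (hy : 0 < y) :
    HasDerivAt (fun y : ℝ => if 0 < y then c⁻¹ * Real.exp (-(c * (1/y - 1/h))) else 0)
      (Real.exp (-(c * (1/y - 1/h))) / y ^ 2) y := by
  have h1 : HasDerivAt (fun y : ℝ => c⁻¹ * Real.exp (-(c * (1/y - 1/h))))
      (Real.exp (-(c * (1/y - 1/h))) / y ^ 2) y := by
    have hinv : HasDerivAt (fun y : ℝ => 1/y) (-(y^2)⁻¹) y := by
      simpa [one_div] using hasDerivAt_inv hy.ne'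
    have hu : HasDerivAt (fun y : ℝ => -(c * (1/y - 1/h))) (-(c * (-(y^2)⁻¹))) y :=
      (((hinv.sub_const (1/h)).const_mul c).neg)
    have h2 := ((hu.exp).const_mul c⁻¹)
    refine h2.congr_deriv ?_
    field_simp
  apply h1.congr_of_eventuallyEq
  filter_upwards [Ioi_mem_nhds hy] with z hz
  simp [hz.out]

lemma G_key {c h : ℝ} (hc : 0 < c) (hh : 0 < h) :
    IntegrableOn (fun y => Real.exp (-(c * (1/y - 1/h))) / y ^ 2) (Set.Ioo 0 h) ∧
      ∫ y in Set.Ioo 0 h, Real.exp (-(c * (1/y - 1/h))) / y ^ 2 = 1/c := by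
  set Ψ : ℝ → ℝ := fun y => if 0 < y then c⁻¹ * Real.exp (-(c * (1/y - 1/h))) else 0 with hΨ
  set g : ℝ → ℝ := fun y => Real.exp (-(c * (1/y - 1/h))) / y ^ 2 with hg
  have hderiv : ∀ y ∈ Set.Ioo (0:ℝ) h, HasDerivAt Ψ (g y) y := fun y hy => G_deriv hc hy.1
  have hpos : ∀ y ∈ Set.Ioo (0:ℝ) h, 0 ≤ g y := fun y hy => by positivity
  have hcont : ContinuousOn Ψ (Set.Icc 0 h) := by
    intro y hy
    rcases hy.1.eq_or_lt with rfl | hy0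
    · have h0 : Ψ 0 = 0 := by simp [hΨ]
      have htends : Tendsto Ψ (nhdsWithin 0 (Set.Ioi 0)) (nhds 0) := by
        have h2 : Tendsto (fun y : ℝ => c⁻¹ * Real.exp (-(c * (1/y - 1/h))))
            (nhdsWithin 0 (Set.Ioi 0)) (nhds 0) := by
          have hb : Tendsto (fun y : ℝ => -(c * (1/y - 1/h))) (nhdsWithin 0 (Set.Ioi 0)) atBot := by
            apply Filter.tendsto_neg_atBot_iff.mpr
            have h1 : Tendsto (fun y : ℝ => 1/y) (nhdsWithin 0 (Set.Ioi 0)) atTop := by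
              simpa [one_div] using tendsto_inv_nhdsGT_zero
            have h2 := tendsto_atTop_add_const_right (nhdsWithin (0:ℝ) (Set.Ioi 0)) (-(1/h)) h1
            simpa [sub_eq_add_neg] using Filter.Tendsto.const_mul_atTop hc h2
          have := (Real.tendsto_exp_atBot.comp hb).const_mul c⁻¹
          simpa using this
        apply h2.congr'
        filter_upwards [self_mem_nhdsWithin] with z hz
        simp [hΨ, hz.out]
      rw [← continuousWithinAt_diff_self]
      show Tendsto Ψ (nhdsWithin 0 (Set.Icc 0 h \ {0})) (nhds (Ψ 0))
      rw [h0]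
      exact htends.mono_left (nhdsWithin_mono _ (fun z hz => hz.1.1.lt_of_ne (Ne.symm hz.2)))
    · exact ((G_deriv hc hy0).continuousAt).continuousWithinAt
  have hioc : IntegrableOn g (Set.Ioc 0 h) :=
    intervalIntegral.integrableOn_deriv_of_nonneg hcont hderiv hpos
  have hint : IntervalIntegrable g volume 0 h := by
    rw [intervalIntegrable_iff_integrableOn_Ioc_of_le hh.le]; exact hioc
  have hval := intervalIntegral.integral_eq_sub_of_hasDerivAt_of_le hh.le hcont hderiv hint
  have : ∫ y in Set.Ioo 0 h, g y = Ψ h - Ψ 0 := by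
    rw [← MeasureTheory.integral_Ioc_eq_integral_Ioo, ← intervalIntegral.integral_of_le hh.le, hval]
  constructor
  · exact hioc.mono_set Set.Ioo_subset_Ioc_self
  · rw [this]
    simp [hΨ, hh]

lemma F2_key {K b : ℝ} (hK : 0 < K) (hb : 0 < b) :
    IntegrableOn (fun x => Real.exp (-(K * ((b - x)/b)))) (Set.Ioo 0 b) ∧
      ∫ x in Set.Ioo 0 b, Real.exp (-(K * ((b - x)/b))) ≤ b / K := by
  have hbne : b ≠ 0 := hb.ne'
  have hKne : K ≠ 0 := hK.ne'
  have hcont : Continuous fun x : ℝ => Real.exp (-(K * ((b - x)/b))) := by fun_prop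
  have hderiv : ∀ x : ℝ, HasDerivAt (fun x => b/K * Real.exp (-(K * ((b - x)/b))))
      (Real.exp (-(K * ((b - x)/b)))) x := by
    intro x
    have h0 : HasDerivAt (fun x : ℝ => b - x) (-1) x := (hasDerivAt_id x).const_sub b
    have h1 := (((h0.div_const b).const_mul K).neg.exp).const_mul (b/K)
    refine h1.congr_deriv ?_
    show b/K * (Real.exp (-(K * ((b - x)/b))) * -(K * (-1 / b))) = _
    field_simp
  have hval := intervalIntegral.integral_eq_sub_of_hasDerivAt
    (f := fun x => b/K * Real.exp (-(K * ((b - x)/b)))) (fun x _ => hderiv x)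
    (hcont.intervalIntegrable 0 b)
  have heq : ∫ x in Set.Ioo 0 b, Real.exp (-(K * ((b - x)/b)))
      = b/K - b/K * Real.exp (-K) := by
    rw [← MeasureTheory.integral_Ioc_eq_integral_Ioo, ← intervalIntegral.integral_of_le hb.le,
      hval]
    simp only [sub_self, zero_div, sub_zero, div_self hbne]
    norm_num
  refine ⟨(hcont.continuousOn.integrableOn_Icc).mono_set Set.Ioo_subset_Icc_self, ?_⟩
  rw [heq]
  have : 0 ≤ b/K * Real.exp (-K) := by positivity
  linarith

lemma pinf_nonneg' (b h x y : ℝ) : 0 ≤ pinf b h x y := by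
  rw [pinf]
  split_ifs with hc
  · obtain ⟨h1, h2, h3, h4⟩ := hc
    have : 0 ≤ 4 * (b - x) * x := by nlinarith
    positivity
  · simp

lemma log_mul_rpow_tendsto {c : ℝ} (hc : 0 < c) :
    Tendsto (fun x : ℝ => Real.log x * x ^ (-c)) atTop (nhds 0) := by
  have h := (isLittleO_log_rpow_atTop hc).tendsto_div_nhds_zero
  apply h.congr'
  filter_upwards [eventually_gt_atTop (0:ℝ)] with x hx
  rw [Real.rpow_neg hx.le, div_eq_mul_inv]

set_option maxHeartbeats 2000000 in
lemma main_bound (ε₁ ε₂ lam b h : ℝ) (hlam : 1 ≤ lam) (hb : 0 < b) (hh : 0 < h)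
    (hbh : b ^ 3 ≤ lam ^ ε₁ * h) :
    ∫ p in (Set.Ioi (0 : ℝ) ×ˢ Set.Ioi (0 : ℝ)) \ Eset lam ε₁ ε₂ b, pinf b h p.1 p.2
      ≤ 6 * lam ^ (-(2 * ε₂)) + 36 * lam ^ (-ε₁) := by
  have hl0 : (0:ℝ) < lam := lt_of_lt_of_le one_pos hlam
  set L : ℝ := lam ^ ε₁ with hLdef
  have hL : 0 < L := rpow_pos_of_pos hl0 _
  set A : ℝ := 2 / 3 * b ^ 3 with hAdef
  have hA : 0 < A := by positivity
  set K : ℝ := L / 3 with hKdef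
  have hK : 0 < K := by positivity
  set r : ℝ := lam ^ (-ε₂) * b with hrdef
  have hr : 0 < r := mul_pos (rpow_pos_of_pos hl0 _) hb
  set S : Set (ℝ × ℝ) := (Set.Ioi (0 : ℝ) ×ˢ Set.Ioi (0 : ℝ)) \ Eset lam ε₁ ε₂ b with hSdef
  -- component functions
  set F1 : ℝ → ℝ := (Set.Ioo (0:ℝ) r).indicator (fun _ => 4 * b * r) with hF1def
  set G1 : ℝ → ℝ := (Set.Ioo (0:ℝ) h).indicator
    (fun y => Real.exp (-(A * (1/y - 1/h))) / y ^ 2) with hG1def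
  set F2 : ℝ → ℝ := (Set.Ioo (0:ℝ) b).indicator
    (fun x => 4 * b ^ 2 * Real.exp (-(K * ((b - x)/b)))) with hF2def
  set G2 : ℝ → ℝ := (Set.Ioo (0:ℝ) h).indicator
    (fun y => Real.exp (-(A/2 * (1/y - 1/h))) / y ^ 2) with hG2def
  have hF1nn : ∀ x, 0 ≤ F1 x := fun x =>
    Set.indicator_nonneg (fun x _ => by positivity) x
  have hG1nn : ∀ y, 0 ≤ G1 y := fun y =>
    Set.indicator_nonneg (fun y _ => by positivity) y
  have hF2nn : ∀ x, 0 ≤ F2 x := fun x =>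
    Set.indicator_nonneg (fun x _ => by positivity) x
  have hG2nn : ∀ y, 0 ≤ G2 y := fun y =>
    Set.indicator_nonneg (fun y _ => by positivity) y
  -- integrability
  have hG1i : Integrable G1 := ((G_key hA hh).1.integrable_indicator measurableSet_Ioo)
  have hG2i : Integrable G2 :=
    (((G_key (by positivity : (0:ℝ) < A/2) hh).1).integrable_indicator measurableSet_Ioo)
  have hF1i : Integrable F1 := by
    refine (IntegrableOn.integrable_indicator ?_ measurableSet_Ioo)
    exact integrableOn_const measure_Ioo_lt_top.ne
  have hF2i : Integrable F2 := by
    refine (IntegrableOn.integrable_indicator ?_ measurableSet_Ioo)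
    exact ((continuous_const.mul (by fun_prop : Continuous fun x : ℝ =>
      Real.exp (-(K * ((b - x)/b))))).continuousOn.integrableOn_Icc).mono_set
      Set.Ioo_subset_Icc_self
  -- measurability of the bad set
  have hE : MeasurableSet (Eset lam ε₁ ε₂ b) := by
    have : Eset lam ε₁ ε₂ b = ({p : ℝ × ℝ | 0 < p.1} ∩ {p | 0 < p.2}
        ∩ {p | p.1 ^ 3 ≤ lam ^ ε₁ * p.2}) ∩ {p | lam ^ (-ε₂) * b ≤ p.1} := by
      ext p; simp only [Eset, Set.mem_setOf_eq, Set.mem_inter_iff]; tauto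
    rw [this]
    exact (((measurableSet_lt measurable_const measurable_fst).inter
      (measurableSet_lt measurable_const measurable_snd)).inter
      (measurableSet_le (measurable_fst.pow_const 3) (measurable_snd.const_mul _))).inter
      (measurableSet_le measurable_const measurable_fst)
  have hS : MeasurableSet S :=
    ((measurableSet_Ioi.prod measurableSet_Ioi).diff hE)
  -- the dominating function
  set Φ : ℝ × ℝ → ℝ := fun p => F1 p.1 * G1 p.2 + F2 p.1 * G2 p.2 with hΦdef
  have hΦnn : ∀ p, 0 ≤ Φ p := fun p =>
    add_nonneg (mul_nonneg (hF1nn _) (hG1nn _)) (mul_nonneg (hF2nn _) (hG2nn _))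
  have hP1 : Integrable (fun p : ℝ × ℝ => F1 p.1 * G1 p.2) := by
    rw [MeasureTheory.Measure.volume_eq_prod]
    exact hF1i.mul_prod hG1i
  have hP2 : Integrable (fun p : ℝ × ℝ => F2 p.1 * G2 p.2) := by
    rw [MeasureTheory.Measure.volume_eq_prod]
    exact hF2i.mul_prod hG2i
  have hΦi : Integrable Φ := hP1.add hP2
  -- pointwise bound
  have hpt : ∀ p : ℝ × ℝ, S.indicator (fun p => pinf b h p.1 p.2) p ≤ Φ p := by
    rintro ⟨x, y⟩
    by_cases hp : (x, y) ∈ S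
    · rw [Set.indicator_of_mem hp]
      obtain ⟨⟨hx0, hy0⟩, hpE⟩ := hp
      simp only [Set.mem_Ioi] at hx0 hy0
      rw [pinf]
      by_cases hif : 0 < x ∧ x < b ∧ 0 < y ∧ y < h
      · obtain ⟨hx, hxb, hy, hyh⟩ := hif
        simp only [hx, hxb, hy, hyh, and_self, if_true, mul_one]
        have hcase : lam ^ ε₁ * y < x ^ 3 ∨ x < lam ^ (-ε₂) * b := by
          by_contra hcon
          push_neg at hcon
          exact hpE ⟨hx0, hy0, hcon.1, hcon.2⟩
        rcases hcase with hc2 | hc1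
        · -- second regime : x^3 > lam^ε₁ y
          have hxIoo : x ∈ Set.Ioo (0:ℝ) b := ⟨hx, hxb⟩
          have hyIoo : y ∈ Set.Ioo (0:ℝ) h := ⟨hy, hyh⟩
          have key : K * ((b - x)/b) ≤ A/2 * (1/y - 1/h) := by
            have h1 : L / x ^ 3 ≤ 1 / y := by
              rw [div_le_div_iff₀ (by positivity) hy]
              nlinarith
            have h2 : 1 / h ≤ L / b ^ 3 := by
              rw [div_le_div_iff₀ hh (by positivity)]
              nlinarith
            have h3 : (b - x)/b ≤ (b ^ 3 - x ^ 3)/x ^ 3 := by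
              rw [div_le_div_iff₀ hb (by positivity)]
              nlinarith [mul_nonneg (sub_nonneg.2 hxb.le)
                  (sub_nonneg.2 (pow_le_pow_left₀ hx.le hxb.le 3)),
                mul_nonneg (mul_nonneg hb.le hx.le)
                  (mul_nonneg (sub_nonneg.2 hxb.le) (add_pos hb hx).le)]
            calc K * ((b - x)/b) ≤ K * ((b ^ 3 - x ^ 3)/x ^ 3) := by
                  exact mul_le_mul_of_nonneg_left h3 hK.le
              _ = b ^ 3 / 3 * (L / x ^ 3 - L / b ^ 3) := by
                  rw [hKdef]; field_simp
              _ ≤ b ^ 3 / 3 * (1/y - 1/h) := by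
                  apply mul_le_mul_of_nonneg_left _ (by positivity)
                  exact sub_le_sub h1 h2
              _ = A/2 * (1/y - 1/h) := by rw [hAdef]; ring
          have hEle : Real.exp (-(A/2 * (1/y - 1/h))) ≤ Real.exp (-(K * ((b - x)/b))) :=
            Real.exp_le_exp.2 (neg_le_neg key)
          have hsplit : Real.exp (-(A * (1/y - 1/h)))
              = Real.exp (-(A/2 * (1/y - 1/h))) * Real.exp (-(A/2 * (1/y - 1/h))) := by
            rw [← Real.exp_add]; ring_nf
          have hΦ2 : F2 x * G2 y = 4 * b ^ 2 * Real.exp (-(K * ((b - x)/b)))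
              * (Real.exp (-(A/2 * (1/y - 1/h))) / y ^ 2) := by
            rw [hF2def, hG2def, Set.indicator_of_mem hxIoo, Set.indicator_of_mem hyIoo]
          have hle2 : 4 * (b - x) * x / y ^ 2 * Real.exp (-(A * (1/y - 1/h)))
              ≤ F2 x * G2 y := by
            rw [hΦ2, hsplit]
            have step : 4 * (b - x) * x * Real.exp (-(A/2 * (1/y - 1/h)))
                * (Real.exp (-(A/2 * (1/y - 1/h))) / y ^ 2)
                ≤ 4 * b ^ 2 * Real.exp (-(K * ((b - x)/b)))
                * (Real.exp (-(A/2 * (1/y - 1/h))) / y ^ 2) := by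
              apply mul_le_mul_of_nonneg_right _ (by positivity)
              apply mul_le_mul (by nlinarith) hEle (by positivity) (by positivity)
            calc 4 * (b - x) * x / y ^ 2
                * (Real.exp (-(A/2 * (1/y - 1/h))) * Real.exp (-(A/2 * (1/y - 1/h))))
                = 4 * (b - x) * x * Real.exp (-(A/2 * (1/y - 1/h)))
                  * (Real.exp (-(A/2 * (1/y - 1/h))) / y ^ 2) := by ring
              _ ≤ _ := step
          calc 4 * (b - x) * x / y ^ 2 * Real.exp (-(A * (1/y - 1/h)))
              ≤ F2 x * G2 y := hle2
            _ ≤ Φ (x, y) := le_add_of_nonneg_left (mul_nonneg (hF1nn _) (hG1nn _))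
        · -- first regime : x < r
          have hxIoo : x ∈ Set.Ioo (0:ℝ) r := ⟨hx, hc1⟩
          have hyIoo : y ∈ Set.Ioo (0:ℝ) h := ⟨hy, hyh⟩
          have hΦ1 : F1 x * G1 y = 4 * b * r * (Real.exp (-(A * (1/y - 1/h))) / y ^ 2) := by
            rw [hF1def, hG1def, Set.indicator_of_mem hxIoo, Set.indicator_of_mem hyIoo]
          have hle1 : 4 * (b - x) * x / y ^ 2 * Real.exp (-(A * (1/y - 1/h)))
              ≤ F1 x * G1 y := by
            rw [hΦ1]
            calc 4 * (b - x) * x / y ^ 2 * Real.exp (-(A * (1/y - 1/h)))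
                = 4 * (b - x) * x * (Real.exp (-(A * (1/y - 1/h))) / y ^ 2) := by ring
              _ ≤ 4 * b * r * (Real.exp (-(A * (1/y - 1/h))) / y ^ 2) := by
                  apply mul_le_mul_of_nonneg_right _ (by positivity)
                  nlinarith [hc1, hr]
          calc 4 * (b - x) * x / y ^ 2 * Real.exp (-(A * (1/y - 1/h)))
              ≤ F1 x * G1 y := hle1
            _ ≤ Φ (x, y) := le_add_of_nonneg_right (mul_nonneg (hF2nn _) (hG2nn _))
      · simp only [hif, if_false, mul_zero]
        exact hΦnn _
    · rw [Set.indicator_of_notMem hp]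
      exact hΦnn _
  -- putting it together
  have hmain : ∫ p in S, pinf b h p.1 p.2 ≤ ∫ p, Φ p := by
    rw [← MeasureTheory.integral_indicator hS]
    exact integral_mono_of_nonneg
      (Filter.Eventually.of_forall fun p =>
        Set.indicator_nonneg (fun q _ => pinf_nonneg' b h q.1 q.2) p)
      hΦi (Filter.Eventually.of_forall hpt)
  -- compute the integral of Φ
  have hintG1 : ∫ y, G1 y = 1 / A := by
    rw [hG1def, MeasureTheory.integral_indicator measurableSet_Ioo]
    exact (G_key hA hh).2
  have hintG2 : ∫ y, G2 y = 2 / A := by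
    rw [hG2def, MeasureTheory.integral_indicator measurableSet_Ioo]
    rw [(G_key (by positivity : (0:ℝ) < A/2) hh).2]
    rw [one_div_div]
  have hintF1 : ∫ x, F1 x = 4 * b * r * r := by
    rw [hF1def, MeasureTheory.integral_indicator measurableSet_Ioo]
    rw [MeasureTheory.setIntegral_const, Real.volume_real_Ioo, sub_zero,
      max_eq_left hr.le, smul_eq_mul]
    ring
  have hintF2 : ∫ x, F2 x ≤ 4 * b ^ 2 * (b / K) := by
    rw [hF2def, MeasureTheory.integral_indicator measurableSet_Ioo]
    rw [MeasureTheory.integral_const_mul]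
    exact mul_le_mul_of_nonneg_left (F2_key hK hb).2 (by positivity)
  have hintF2nn : 0 ≤ ∫ x, F2 x :=
    integral_nonneg hF2nn
  have hΦval : ∫ p, Φ p ≤ 4 * b * r * r * (1/A) + 4 * b ^ 2 * (b / K) * (2/A) := by
    rw [hΦdef]
    rw [MeasureTheory.integral_add hP1 hP2]
    have e1 : ∫ p : ℝ × ℝ, F1 p.1 * G1 p.2 = (∫ x, F1 x) * ∫ y, G1 y := by
      rw [MeasureTheory.Measure.volume_eq_prod]
      exact MeasureTheory.integral_prod_mul F1 G1
    have e2 : ∫ p : ℝ × ℝ, F2 p.1 * G2 p.2 = (∫ x, F2 x) * ∫ y, G2 y := by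
      rw [MeasureTheory.Measure.volume_eq_prod]
      exact MeasureTheory.integral_prod_mul F2 G2
    rw [e1, e2, hintF1, hintG1, hintG2]
    have h2A : 0 < 2 / A := by positivity
    exact add_le_add le_rfl (mul_le_mul_of_nonneg_right hintF2 h2A.le)
  -- final arithmetic
  have harith : 4 * b * r * r * (1/A) + 4 * b ^ 2 * (b / K) * (2/A)
      = 6 * lam ^ (-(2 * ε₂)) + 36 * lam ^ (-ε₁) := by
    have hLinv : 1 / L = lam ^ (-ε₁) := by
      rw [hLdef, one_div, ← Real.rpow_neg hl0.le]
    have e1' : 4 * b * r * r * (1/A) = 6 * lam ^ (-(2*ε₂)) := by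
      rw [hAdef, hrdef, show -(2*ε₂) = -ε₂ + -ε₂ by ring, Real.rpow_add hl0]
      field_simp
      ring
    have e2' : 4 * b ^ 2 * (b / K) * (2/A) = 36 * lam ^ (-ε₁) := by
      rw [← hLinv, hAdef, hKdef]
      field_simp
      ring
    rw [e1', e2']
  calc ∫ p in S, pinf b h p.1 p.2 ≤ ∫ p, Φ p := hmain
    _ ≤ 4 * b * r * r * (1/A) + 4 * b ^ 2 * (b / K) * (2/A) := hΦval
    _ = 6 * lam ^ (-(2 * ε₂)) + 36 * lam ^ (-ε₁) := harith

/-- Uniformly over `(b,h) ∈ (0,∞)²` with `b³ ≤ λ^{ε₁} h`,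
`(log λ) ∫_{(0,∞)² \ E^{(λ)}_{(b,h)}(ε₁,ε₂)} p^{(∞)}((b,h),·) → 0` as `λ → ∞`. -/
theorem pinf_escape_neglig (ε₁ ε₂ : ℝ) (hε₁ : 0 < ε₁) (hε₂ : 0 < ε₂) :
    ∀ ε > (0 : ℝ), ∀ᶠ lam : ℝ in atTop, ∀ b h : ℝ, 0 < b → 0 < h → b ^ 3 ≤ lam ^ ε₁ * h →
      Real.log lam *
        ∫ p in (Set.Ioi (0 : ℝ) ×ˢ Set.Ioi (0 : ℝ)) \ Eset lam ε₁ ε₂ b, pinf b h p.1 p.2 < ε := by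
  intro ε hε
  have h1 := (log_mul_rpow_tendsto (by positivity : (0:ℝ) < 2 * ε₂)).const_mul 6
  have h2 := (log_mul_rpow_tendsto hε₁).const_mul 36
  have h3 := h1.add h2
  rw [show (6:ℝ) * 0 + 36 * 0 = 0 by norm_num] at h3
  have h4 : Tendsto (fun lam : ℝ => Real.log lam * (6 * lam ^ (-(2 * ε₂)) + 36 * lam ^ (-ε₁)))
      atTop (nhds 0) := by
    apply h3.congr
    intro x
    ring
  filter_upwards [h4.eventually (gt_mem_nhds hε), eventually_ge_atTop (1:ℝ)]
    with lam hlt hlam1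
  intro b h hb hh hbh
  have hlog : 0 ≤ Real.log lam := Real.log_nonneg hlam1
  have hbd := main_bound ε₁ ε₂ lam b h hlam1 hb hh hbh
  calc Real.log lam *
        ∫ p in (Set.Ioi (0 : ℝ) ×ˢ Set.Ioi (0 : ℝ)) \ Eset lam ε₁ ε₂ b, pinf b h p.1 p.2
      ≤ Real.log lam * (6 * lam ^ (-(2 * ε₂)) + 36 * lam ^ (-ε₁)) :=
        mul_le_mul_of_nonneg_left hbd hlog
    _ < ε := hlt
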